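/- Let I = [a,b], let A : ℝ → M₂(ℍ) be continuous on I, let t₀ ∈ I, and let x₁, x₂ be solutions of x' = A(t)x on I such that the 2×2 quaternion matrix whose columns are x₁(t₀) and x₂(t₀) is invertible. Then for every solution x of x' = A(t)x on I there exist quaternion constants q₁, q₂ ∈ ℍ such that x(t) = x₁(t)q₁ + x₂(t)q₂ for all t ∈ I. -/

import Mathlib

open Set

lemma qde_lipschitz_bound (a b : ℝ)
    (A : ℝ → Matrix (Fin 2) (Fin 2) (Quaternion ℝ))
    (hA : ContinuousOn A (Set.Icc a b)) :
    ∃ K : NNReal, ∀ t ∈ Set.Icc a b, ∀ z : Fin 2 → Quaternion ℝ,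
      ‖(A t).mulVec z‖ ≤ K * ‖z‖ := by
  have hA' : ContinuousOn (fun t => (A t : Fin 2 → Fin 2 → Quaternion ℝ)) (Set.Icc a b) := hA
  obtain ⟨C, hC⟩ := IsCompact.exists_bound_of_continuousOn
    (E := Fin 2 → Fin 2 → Quaternion ℝ) isCompact_Icc hA'
  refine ⟨Real.toNNReal (2 * max C 0), fun t ht z => ?_⟩
  have hcoe : ((Real.toNNReal (2 * max C 0)) : ℝ) = 2 * max C 0 :=
    Real.coe_toNNReal _ (by positivity)
  rw [hcoe]
  have hCz : ∀ i j, ‖A t i j‖ ≤ max C 0 := fun i j =>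
    le_trans (le_trans (norm_le_pi_norm (A t i) j)
      (norm_le_pi_norm (A t : Fin 2 → Fin 2 → Quaternion ℝ) i)) (le_max_of_le_left (hC t ht))
  have hz : ∀ j, ‖z j‖ ≤ ‖z‖ := fun j => norm_le_pi_norm z j
  have key : ∀ i, ‖((A t).mulVec z) i‖ ≤ (2 * max C 0) * ‖z‖ := by
    intro i
    have : ((A t).mulVec z) i = A t i 0 * z 0 + A t i 1 * z 1 := by
      simp [Matrix.mulVec, dotProduct, Fin.sum_univ_two]
    rw [this, two_mul, add_mul]
    refine le_trans (norm_add_le _ _) (add_le_add ?_ ?_) <;>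
      refine le_trans (norm_mul_le _ _) ?_ <;>
      exact mul_le_mul (hCz _ _) (hz _) (norm_nonneg _) (le_max_right _ _)
  refine (pi_norm_le_iff_of_nonneg ?_).2 key
  positivity

lemma qde_unique (a b : ℝ)
    (A : ℝ → Matrix (Fin 2) (Fin 2) (Quaternion ℝ))
    (hA : ContinuousOn A (Set.Icc a b))
    (t₀ : ℝ) (ht₀ : t₀ ∈ Set.Icc a b)
    (f g : ℝ → Fin 2 → Quaternion ℝ)
    (hf : ∀ t ∈ Set.Icc a b, HasDerivAt f ((A t).mulVec (f t)) t)
    (hg : ∀ t ∈ Set.Icc a b, HasDerivAt g ((A t).mulVec (g t)) t)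
    (heq : f t₀ = g t₀) : Set.EqOn f g (Set.Icc a b) := by
  have hab : a ≤ b := ht₀.1.trans ht₀.2
  obtain ⟨K, hK⟩ := qde_lipschitz_bound a b A hA
  set v : ℝ → (Fin 2 → Quaternion ℝ) → (Fin 2 → Quaternion ℝ) :=
    fun t z => (A ((Set.projIcc a b hab t) : ℝ)).mulVec z with hv_def
  have hv : ∀ t, LipschitzOnWith K (v t) Set.univ := by
    intro t
    refine (LipschitzWith.of_dist_le_mul fun x y => ?_).lipschitzOnWith
    rw [dist_eq_norm, dist_eq_norm, hv_def]
    simp only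
    rw [← Matrix.mulVec_sub]
    exact hK _ (Set.projIcc a b hab t).2 _
  have hveq : ∀ t ∈ Set.Icc a b, ∀ z, v t z = (A t).mulVec z := by
    intro t ht z
    rw [hv_def]
    simp only [Set.projIcc_of_mem hab ht]
  have hfc : ContinuousOn f (Set.Icc a b) :=
    fun t ht => ((hf t ht).continuousAt).continuousWithinAt
  have hgc : ContinuousOn g (Set.Icc a b) :=
    fun t ht => ((hg t ht).continuousAt).continuousWithinAt
  rw [← Set.Icc_union_Icc_eq_Icc ht₀.1 ht₀.2]
  apply Set.EqOn.union
  · refine ODE_solution_unique_of_mem_Icc_left (v := v) (s := fun _ => Set.univ) (fun t _ => hv t)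
      (hfc.mono (Set.Icc_subset_Icc_right ht₀.2)) ?_ (fun _ _ => trivial)
      (hgc.mono (Set.Icc_subset_Icc_right ht₀.2)) ?_ (fun _ _ => trivial) heq
    · intro t ht
      have ht' : t ∈ Set.Icc a b := ⟨le_of_lt ht.1, ht.2.trans ht₀.2⟩
      rw [hveq t ht']
      exact (hf t ht').hasDerivWithinAt
    · intro t ht
      have ht' : t ∈ Set.Icc a b := ⟨le_of_lt ht.1, ht.2.trans ht₀.2⟩
      rw [hveq t ht']
      exact (hg t ht').hasDerivWithinAt
  · refine ODE_solution_unique_of_mem_Icc_right (v := v) (s := fun _ => Set.univ) (fun t _ => hv t)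
      (hfc.mono (Set.Icc_subset_Icc_left ht₀.1)) ?_ (fun _ _ => trivial)
      (hgc.mono (Set.Icc_subset_Icc_left ht₀.1)) ?_ (fun _ _ => trivial) heq
    · intro t ht
      have ht' : t ∈ Set.Icc a b := ⟨ht₀.1.trans ht.1, le_of_lt ht.2⟩
      rw [hveq t ht']
      exact (hf t ht').hasDerivWithinAt
    · intro t ht
      have ht' : t ∈ Set.Icc a b := ⟨ht₀.1.trans ht.1, le_of_lt ht.2⟩
      rw [hveq t ht']
      exact (hg t ht').hasDerivWithinAt


/-- Structure of the general solution: if `x₁, x₂` are solutions of `x' = A(t) x` on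
`I = [a,b]` whose initial values at `t₀` form an invertible quaternion matrix, then every
solution is a right quaternionic linear combination of `x₁` and `x₂`. -/
theorem qde_general_solution (a b : ℝ)
    (A : ℝ → Matrix (Fin 2) (Fin 2) (Quaternion ℝ))
    (hA : ContinuousOn A (Set.Icc a b))
    (t₀ : ℝ) (ht₀ : t₀ ∈ Set.Icc a b)
    (x₁ x₂ : ℝ → Fin 2 → Quaternion ℝ)
    (hx₁ : ∀ t ∈ Set.Icc a b, HasDerivAt x₁ ((A t).mulVec (x₁ t)) t)
    (hx₂ : ∀ t ∈ Set.Icc a b, HasDerivAt x₂ ((A t).mulVec (x₂ t)) t)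
    (hM : IsUnit (Matrix.of fun i j => ![x₁ t₀, x₂ t₀] j i)) :
    ∀ x : ℝ → Fin 2 → Quaternion ℝ,
      (∀ t ∈ Set.Icc a b, HasDerivAt x ((A t).mulVec (x t)) t) →
      ∃ q₁ q₂ : Quaternion ℝ, ∀ t ∈ Set.Icc a b,
        x t = fun i => x₁ t i * q₁ + x₂ t i * q₂ := by
  intro x hx
  obtain ⟨u, huM⟩ := hM
  set N := Units.val u⁻¹ with hN
  set q : Fin 2 → Quaternion ℝ := N.mulVec (x t₀) with hq
  have hMq : (Matrix.of fun i j => ![x₁ t₀, x₂ t₀] j i).mulVec q = x t₀ := by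
    rw [hq, Matrix.mulVec_mulVec, hN, ← huM, ← Units.val_mul, mul_inv_cancel,
      Units.val_one, Matrix.one_mulVec]
  have hinit : ∀ i, x t₀ i = x₁ t₀ i * q 0 + x₂ t₀ i * q 1 := by
    intro i
    rw [← hMq]
    simp [Matrix.mulVec, dotProduct, Fin.sum_univ_two, Matrix.of_apply,
      Matrix.cons_val_zero, Matrix.cons_val_one, Matrix.head_cons]
  set y : ℝ → Fin 2 → Quaternion ℝ := fun t i => x₁ t i * q 0 + x₂ t i * q 1 with hy
  have hyd : ∀ t ∈ Set.Icc a b, HasDerivAt y ((A t).mulVec (y t)) t := by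
    intro t ht
    rw [hasDerivAt_pi (φ := y)]
    intro i
    have h1 := (hasDerivAt_pi.mp (hx₁ t ht)) i
    have h2 := (hasDerivAt_pi.mp (hx₂ t ht)) i
    have := (h1.mul_const (q 0)).add (h2.mul_const (q 1))
    convert this using 1
    · rfl
    simp only [Matrix.mulVec, dotProduct, Fin.sum_univ_two, hy, mul_add, add_mul,
      mul_assoc]
    abel
  have heq : Set.EqOn x y (Set.Icc a b) := by
    refine qde_unique a b A hA t₀ ht₀ x y hx hyd ?_
    funext i
    exact hinit i
  exact ⟨q 0, q 1, fun t ht => heq ht⟩
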